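/- Let R be a commutative ℚ-algebra and n a natural number. Equip the formal power series ring R⟦u⟧ with the coefficientwise (product) topology, R being discrete, and the matrix ring M_n(R⟦u⟧) with the corresponding product topology. Let N ∈ M_n(R⟦u⟧) be a matrix all of whose entries have zero constant coefficient. Then the family ((1/k!)·N^k)_{k∈ℕ} is summable in M_n(R⟦u⟧), the family ((1/k!)·(tr N)^k)_{k∈ℕ} is summable in R⟦u⟧, and det(∑_{k≥0} (1/k!)·N^k) = ∑_{k≥0} (1/k!)·(tr N)^k; that is, the determinant of the matrix exponential of N equals the exponential of the trace of N. -/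

import Mathlib

open Polynomial Finset Matrix

namespace Stmt1Aux

variable {Q : Type*} [CommRing Q]

lemma derivative_finset_prod {ι : Type*} [DecidableEq ι] (s : Finset ι) (f : ι → Q[X]) :
    derivative (∏ i ∈ s, f i) = ∑ i ∈ s, (∏ j ∈ s.erase i, f j) * derivative (f i) := by
  classical
  induction s using Finset.induction_on with
  | empty => simp
  | @insert a s ha ih =>
    rw [Finset.prod_insert ha, derivative_mul, ih, Finset.sum_insert ha,
      Finset.erase_insert ha, Finset.mul_sum]
    rw [mul_comm (Polynomial.derivative (f a))]
    congr 1
    refine Finset.sum_congr rfl fun i hi => ?_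
    rw [Finset.erase_insert_of_ne (by rintro rfl; exact ha hi),
      Finset.prod_insert (by simp [Finset.mem_erase]; tauto)]
    ring
lemma derivative_det {n : ℕ} (P : Matrix (Fin n) (Fin n) Q[X]) :
    derivative P.det = ∑ i, ∑ r, adjugate P i r * derivative (P r i) := by
  classical
  have key : derivative P.det
      = ∑ i, (P.updateCol i fun r => derivative (P r i)).det := by
    rw [Matrix.det_apply, map_sum]
    have : ∀ σ : Equiv.Perm (Fin n),
        derivative (Equiv.Perm.sign σ • ∏ i, P (σ i) i)
          = ∑ i, Equiv.Perm.sign σ •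
              ((∏ j ∈ Finset.univ.erase i, P (σ j) j) * derivative (P (σ i) i)) := by
      intro σ
      rw [Units.smul_def, map_zsmul, derivative_finset_prod, Finset.smul_sum]
      simp_rw [Units.smul_def]
    simp_rw [this]
    rw [Finset.sum_comm]
    refine Finset.sum_congr rfl fun i _ => ?_
    rw [Matrix.det_apply]
    refine Finset.sum_congr rfl fun σ _ => ?_
    congr 1
    rw [← Finset.mul_prod_erase (univ) _ (Finset.mem_univ i)]
    rw [Matrix.updateCol_apply, if_pos rfl]
    rw [mul_comm]
    congr 1
    refine Finset.prod_congr rfl fun j hj => ?_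
    rw [Matrix.updateCol_apply, if_neg (Finset.ne_of_mem_erase hj)]
  rw [key]
  refine Finset.sum_congr rfl fun i _ => ?_
  rw [← Matrix.cramer_apply, Matrix.cramer_eq_adjugate_mulVec]
  simp [Matrix.mulVec, dotProduct]

lemma ode_unique [Algebra ℚ Q] {c f g : Q[X]} (hf : derivative f = c * f)
    (hg : derivative g = c * g) (h0 : f.coeff 0 = g.coeff 0) : f = g := by
  ext k
  induction k using Nat.strong_induction_on with
  | _ k ih =>
    match k with
    | 0 => exact h0
    | k + 1 =>
      have hu : IsUnit ((k : Q) + 1) := by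
        have h1 : ((k : Q) + 1) = algebraMap ℚ Q ((k : ℚ) + 1) := by
          push_cast; ring
        rw [h1]
        exact (isUnit_iff_ne_zero.2 (by positivity)).map _
      apply hu.mul_right_cancel
      have hf' := congrArg (fun p : Q[X] => p.coeff k) hf
      have hg' := congrArg (fun p : Q[X] => p.coeff k) hg
      simp only [Polynomial.coeff_derivative, Polynomial.coeff_mul] at hf' hg'
      rw [hf', hg']
      refine Finset.sum_congr rfl fun x hx => ?_
      rw [Finset.HasAntidiagonal.mem_antidiagonal] at hx
      rw [ih x.2 (by omega)]

lemma deriv_series (c : ℕ → Q) (hrec : ∀ k : ℕ, ((k : Q) + 1) * c (k + 1) = c k)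
    (b : ℕ → Q) (K : ℕ) :
    derivative (∑ k ∈ range (K + 1), C (c k) * X ^ k * C (b k))
      = ∑ k ∈ range K, C (c k) * X ^ k * C (b (k + 1)) := by
  rw [map_sum, Finset.sum_range_succ']
  have h0 : derivative (C (c 0) * X ^ 0 * C (b 0)) = 0 := by
    simp
  rw [h0, add_zero]
  refine Finset.sum_congr rfl fun k hk => ?_
  rw [mul_right_comm, derivative_mul, derivative_mul, derivative_C, derivative_C,
    zero_mul, mul_zero, add_zero, zero_mul, zero_add, derivative_X_pow]
  push_cast
  rw [← hrec k, _root_.map_mul C]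
  ring

lemma coeff_zero_series (c : ℕ → Q) (b : ℕ → Q) (K : ℕ) :
    Polynomial.constantCoeff (∑ k ∈ range (K + 1), C (c k) * X ^ k * C (b k))
      = c 0 * b 0 := by
  rw [map_sum, Finset.sum_range_succ']
  simp [Polynomial.constantCoeff_apply, Polynomial.coeff_X_pow]

lemma eval_one_series (c : ℕ → Q) (b : ℕ → Q) (K : ℕ) :
    Polynomial.eval 1 (∑ k ∈ range (K + 1), C (c k) * X ^ k * C (b k))
      = ∑ k ∈ range (K + 1), c k * b k := by
  simp [Polynomial.eval_finset_sum]


section Core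

variable [Algebra ℚ Q] {n : ℕ}

lemma core (A : Matrix (Fin n) (Fin n) Q) (c : ℕ → Q) (K : ℕ)
    (hc0 : c 0 = 1) (hrec : ∀ k : ℕ, ((k : Q) + 1) * c (k + 1) = c k)
    (hA : A ^ (K + 1) = 0) (hτ : Matrix.trace A ^ (K + 1) = 0) :
    (∑ k ∈ range (K + 1), c k • A ^ k).det
      = ∑ k ∈ range (K + 1), c k • Matrix.trace A ^ k := by
  classical
  set τ := Matrix.trace A with hτdef
  set A' : Matrix (Fin n) (Fin n) Q[X] := A.map C with hA'
  set B : Matrix (Fin n) (Fin n) Q[X] :=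
    ∑ k ∈ range (K + 1), (C (c k) * X ^ k) • A' ^ k with hB
  have hA'pow : ∀ k : ℕ, A' ^ k = (A ^ k).map C := by
    intro k
    rw [hA', ← RingHom.mapMatrix_apply, ← map_pow, RingHom.mapMatrix_apply]
  have hBij : ∀ i j, B i j = ∑ k ∈ range (K + 1), C (c k) * X ^ k * C ((A ^ k) i j) := by
    intro i j
    rw [hB, Matrix.sum_apply]
    refine Finset.sum_congr rfl fun k _ => ?_
    rw [Matrix.smul_apply, hA'pow, Matrix.map_apply, smul_eq_mul]
  -- derivative of B entrywise is A' * B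
  have hB' : ∀ i j, derivative (B i j) = (A' * B) i j := by
    intro i j
    rw [hBij, deriv_series c hrec]
    have hrhs : (A' * B) i j = ∑ k ∈ range (K + 1), C (c k) * X ^ k * C ((A ^ (k + 1)) i j) := by
      rw [Matrix.mul_apply]
      simp_rw [hBij, Finset.mul_sum]
      rw [Finset.sum_comm]
      refine Finset.sum_congr rfl fun k _ => ?_
      have : ∀ l, A' i l * (C (c k) * X ^ k * C ((A ^ k) l j))
          = C (c k) * X ^ k * (C (A i l) * C ((A ^ k) l j)) := by
        intro l; rw [hA', Matrix.map_apply]; ring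
      simp_rw [this]
      rw [← Finset.mul_sum]
      simp_rw [← _root_.map_mul C]
      rw [← map_sum C, ← Matrix.mul_apply, ← pow_succ']
    rw [hrhs, Finset.sum_range_succ, hA, Matrix.zero_apply, _root_.map_zero C, mul_zero, add_zero]
  -- trace of A'
  have htrA' : Matrix.trace A' = C τ := by
    rw [hτdef, Matrix.trace, Matrix.trace, map_sum]
    refine Finset.sum_congr rfl fun i _ => rfl
  -- ODE for det B
  have hdet : derivative B.det = C τ * B.det := by
    rw [derivative_det]
    have : ∀ i r : Fin n, adjugate B i r * derivative (B r i) = adjugate B i r * (A' * B) r i := by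
      intro i r; rw [hB']
    simp_rw [this]
    have : ∑ i, ∑ r, adjugate B i r * (A' * B) r i = Matrix.trace (adjugate B * (A' * B)) := by
      rw [Matrix.trace]
      refine Finset.sum_congr rfl fun i _ => ?_
      rw [Matrix.diag_apply, Matrix.mul_apply]
    rw [this, Matrix.trace_mul_comm, mul_assoc, Matrix.mul_adjugate, Matrix.mul_smul,
      mul_one, Matrix.trace_smul, htrA', smul_eq_mul, mul_comm]
  -- scalar series g
  set g : Q[X] := ∑ k ∈ range (K + 1), C (c k) * X ^ k * C (τ ^ k) with hg
  have hgder : derivative g = C τ * g := by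
    have hstep : ∀ k : ℕ, C τ * (C (c k) * X ^ k * C (τ ^ k))
        = C (c k) * X ^ k * C (τ ^ (k + 1)) := by
      intro k; rw [pow_succ', _root_.map_mul C]; ring
    rw [hg, deriv_series c hrec, Finset.mul_sum]
    simp_rw [hstep]
    rw [Finset.sum_range_succ, hτ, _root_.map_zero C, mul_zero, add_zero]
  -- equal constant coefficients
  have h0 : B.det.coeff 0 = g.coeff 0 := by
    have hmap : (Polynomial.constantCoeff (R := Q)).mapMatrix B = 1 := by
      ext i j
      rw [RingHom.mapMatrix_apply, Matrix.map_apply, hBij, coeff_zero_series, hc0, one_mul,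
        pow_zero]
    have h1 : Polynomial.constantCoeff B.det = 1 := by
      rw [RingHom.map_det, hmap, Matrix.det_one]
    have h2 : Polynomial.constantCoeff g = 1 := by
      rw [hg, coeff_zero_series, hc0, pow_zero, one_mul]
    rw [show (B.det.coeff 0) = Polynomial.constantCoeff B.det from rfl, h1,
      show (g.coeff 0) = Polynomial.constantCoeff g from rfl, h2]
  have hBg : B.det = g := ode_unique hdet hgder h0
  -- evaluate at 1
  have hmap1 : (Polynomial.evalRingHom (1 : Q)).mapMatrix B = ∑ k ∈ range (K + 1), c k • A ^ k := by
    ext i j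
    rw [RingHom.mapMatrix_apply, Matrix.map_apply, hBij, Matrix.sum_apply]
    rw [show ((Polynomial.evalRingHom (1 : Q)) : Q[X] → Q) = Polynomial.eval 1 from rfl]
    rw [eval_one_series]
    refine Finset.sum_congr rfl fun k _ => ?_
    rw [Matrix.smul_apply, smul_eq_mul]
  have := congrArg (Polynomial.eval (1 : Q)) hBg
  rw [hg, eval_one_series] at this
  rw [show Polynomial.eval (1:Q) B.det = (Polynomial.evalRingHom (1:Q)) B.det from rfl,
    RingHom.map_det, hmap1] at this
  rw [this]
  refine Finset.sum_congr rfl fun k _ => (smul_eq_mul _ _).symm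

end Core

section PS

open PowerSeries Filter

variable {R : Type*} [CommRing R]

/-- The coefficientwise topology on power series. -/
noncomputable abbrev psTop (R : Type*) [Semiring R] : TopologicalSpace (PowerSeries R) :=
  TopologicalSpace.induced (fun (f : PowerSeries R) (k : ℕ) => PowerSeries.coeff k f)
    (@Pi.topologicalSpace ℕ (fun _ => R) (fun _ => ⊥))

lemma t2_ps : @T2Space (PowerSeries R) (psTop R) := by
  letI : TopologicalSpace R := ⊥
  haveI : DiscreteTopology R := ⟨rfl⟩
  letI := psTop R
  have hemb : Topology.IsEmbedding (fun (f : PowerSeries R) (k : ℕ) => PowerSeries.coeff k f) := by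
    refine ⟨⟨rfl⟩, ?_⟩
    intro f g h
    exact PowerSeries.ext fun k => congrFun h k
  exact hemb.t2Space

lemma tendsto_sum_ps (f : ℕ → PowerSeries R)
    (hf : ∀ p k : ℕ, p < k → PowerSeries.coeff p (f k) = 0) :
    Filter.Tendsto (fun s : Finset ℕ => ∑ k ∈ s, f k) Filter.atTop
      (@nhds _ (psTop R)
        (PowerSeries.mk fun m => ∑ k ∈ range (m + 1), PowerSeries.coeff m (f k))) := by
  letI : TopologicalSpace R := ⊥
  haveI : DiscreteTopology R := ⟨rfl⟩
  rw [nhds_induced, Filter.tendsto_comap_iff]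
  rw [tendsto_pi_nhds]
  intro m
  rw [nhds_discrete R]
  rw [Filter.tendsto_pure]
  filter_upwards [Filter.eventually_ge_atTop (Finset.range (m + 1))] with s hs
  show PowerSeries.coeff m (∑ k ∈ s, f k) = _
  rw [map_sum, PowerSeries.coeff_mk]
  refine (Finset.sum_subset hs fun k _ hk => ?_).symm
  exact hf m k (by simpa using hk)

lemma hasSum_ps (f : ℕ → PowerSeries R)
    (hf : ∀ p k : ℕ, p < k → PowerSeries.coeff p (f k) = 0) :
    @HasSum (PowerSeries R) ℕ _ (psTop R) f
      (PowerSeries.mk fun m => ∑ k ∈ range (m + 1), PowerSeries.coeff m (f k))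
      (SummationFilter.unconditional ℕ) :=
  tendsto_sum_ps f hf


lemma hasSum_mat {n : ℕ} (f : ℕ → Matrix (Fin n) (Fin n) (PowerSeries R))
    (hf : ∀ (i j : Fin n) (p k : ℕ), p < k → PowerSeries.coeff p (f k i j) = 0) :
    letI := psTop R
    HasSum f (Matrix.of fun i j => PowerSeries.mk fun m =>
      ∑ k ∈ range (m + 1), PowerSeries.coeff m (f k i j)) := by
  letI := psTop R
  show Filter.Tendsto (β := Fin n → Fin n → PowerSeries R) (fun s : Finset ℕ => ∑ k ∈ s, f k) Filter.atTop
    (@nhds (Fin n → Fin n → PowerSeries R)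
      (@Pi.topologicalSpace _ _ fun _ => @Pi.topologicalSpace _ _ fun _ => psTop R)
      (fun i j => PowerSeries.mk fun m =>
        ∑ k ∈ range (m + 1), PowerSeries.coeff m (f k i j)))
  rw [tendsto_pi_nhds]
  intro i
  rw [tendsto_pi_nhds]
  intro j
  refine (tendsto_sum_ps (fun k => f k i j) (hf i j)).congr fun s => ?_
  exact (Matrix.sum_apply i j s f).symm

end PS

section Main

open PowerSeries

variable {R : Type*} [CommRing R] [Algebra ℚ R] {n : ℕ}

lemma smul_one_mul_ps (q : ℚ) (x : PowerSeries R) : q • x = (q • (1 : PowerSeries R)) * x := by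
  rw [← Algebra.algebraMap_eq_smul_one, ← Algebra.smul_def]

lemma fact_rec (k : ℕ) :
    ((k : PowerSeries R) + 1) * (((k+1).factorial : ℚ)⁻¹ • (1 : PowerSeries R))
      = ((k.factorial : ℚ)⁻¹ • (1 : PowerSeries R)) := by
  rw [mul_smul_comm, mul_one]
  have h1 : ((k : PowerSeries R) + 1) = (((k : ℚ) + 1)) • (1 : PowerSeries R) := by
    rw [← Algebra.algebraMap_eq_smul_one, map_add, map_natCast, _root_.map_one]
  rw [h1, smul_smul]
  congr 1
  have h2 : ((k+1).factorial : ℚ) = ((k : ℚ) + 1) * (k.factorial : ℚ) := by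
    rw [Nat.factorial_succ]; push_cast; ring
  rw [h2, mul_inv]
  have h3 : ((k : ℚ) + 1) ≠ 0 := by positivity
  field_simp

lemma det_exp_eq (N : Matrix (Fin n) (Fin n) (PowerSeries R))
    (hN : ∀ i j, PowerSeries.constantCoeff (N i j) = 0) :
    (Matrix.of fun i j => PowerSeries.mk fun m =>
        ∑ k ∈ range (m + 1), PowerSeries.coeff m ((((k.factorial : ℚ)⁻¹ • N ^ k)) i j)).det
      = PowerSeries.mk fun m =>
        ∑ k ∈ range (m + 1), PowerSeries.coeff m ((k.factorial : ℚ)⁻¹ • N.trace ^ k) := by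
  classical
  -- divisibility of entries of powers
  have hD : ∀ (k : ℕ) (i j : Fin n), (X : PowerSeries R) ^ k ∣ (N ^ k) i j := by
    intro k
    induction k with
    | zero => intro i j; simp
    | succ k ih =>
      intro i j
      rw [show N ^ (k+1) = N ^ k * N from pow_succ N k, Matrix.mul_apply]
      refine Finset.dvd_sum fun l _ => ?_
      rw [pow_succ]
      exact mul_dvd_mul (ih i l) (PowerSeries.X_dvd_iff.2 (hN l j))
  have htr0 : PowerSeries.constantCoeff N.trace = 0 := by
    rw [Matrix.trace]
    rw [map_sum]
    exact Finset.sum_eq_zero fun i _ => hN i i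
  have hDtr : ∀ k : ℕ, (X : PowerSeries R) ^ k ∣ N.trace ^ k := fun k =>
    pow_dvd_pow_of_dvd (PowerSeries.X_dvd_iff.2 htr0) k
  apply PowerSeries.ext
  intro m
  set J : Ideal (PowerSeries R) := Ideal.span {(X : PowerSeries R) ^ (m + 1)} with hJ
  set π : PowerSeries R →+* (PowerSeries R ⧸ J) := Ideal.Quotient.mk J with hπ
  set F : Matrix (Fin n) (Fin n) (PowerSeries R) :=
    ∑ k ∈ range (m + 1), (k.factorial : ℚ)⁻¹ • N ^ k with hF
  set G' : PowerSeries R := ∑ k ∈ range (m + 1), (k.factorial : ℚ)⁻¹ • N.trace ^ k with hG'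
  set c : ℕ → (PowerSeries R ⧸ J) := fun k => π ((k.factorial : ℚ)⁻¹ • 1) with hc
  -- the quotient is a ℚ-algebra
  -- hypotheses of `core`
  have hc0 : c 0 = 1 := by
    rw [hc]
    simp
  have hrec : ∀ k : ℕ, ((k : PowerSeries R ⧸ J) + 1) * c (k + 1) = c k := by
    intro k
    rw [hc]
    have : ((k : PowerSeries R ⧸ J) + 1) = π ((k : PowerSeries R) + 1) := by
      rw [map_add, map_natCast, _root_.map_one]
    rw [this, ← _root_.map_mul, fact_rec]
  have hApow : ∀ k : ℕ, (π.mapMatrix N) ^ k = π.mapMatrix (N ^ k) := fun k => (map_pow _ _ _).symm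
  have hA : (π.mapMatrix N) ^ (m + 1) = 0 := by
    rw [hApow]
    ext i j
    rw [RingHom.mapMatrix_apply, Matrix.map_apply, Matrix.zero_apply]
    rw [hπ]
    rw [Ideal.Quotient.eq_zero_iff_mem, hJ, Ideal.mem_span_singleton]
    exact hD (m+1) i j
  have htrmap : (π.mapMatrix N).trace = π N.trace := by
    rw [Matrix.trace, Matrix.trace, map_sum]
    rfl
  have hτ : (π.mapMatrix N).trace ^ (m + 1) = 0 := by
    rw [htrmap, ← _root_.map_pow, hπ, Ideal.Quotient.eq_zero_iff_mem, hJ,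
      Ideal.mem_span_singleton]
    exact hDtr (m+1)
  have hcore := core (π.mapMatrix N) c m hc0 hrec hA hτ
  -- transfer F and G'
  have hFmap : π.mapMatrix F = ∑ k ∈ range (m + 1), c k • (π.mapMatrix N) ^ k := by
    rw [hF, _root_.map_sum]
    refine Finset.sum_congr rfl fun k _ => ?_
    ext i j
    rw [RingHom.mapMatrix_apply, Matrix.map_apply, Matrix.smul_apply, Matrix.smul_apply,
      smul_eq_mul, smul_one_mul_ps, _root_.map_mul, hApow, RingHom.mapMatrix_apply,
      Matrix.map_apply, hc]
  have hGmap : π G' = ∑ k ∈ range (m + 1), c k • (π.mapMatrix N).trace ^ k := by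
    rw [hG', map_sum]
    refine Finset.sum_congr rfl fun k _ => ?_
    rw [smul_one_mul_ps, _root_.map_mul, htrmap, ← _root_.map_pow, hc, smul_eq_mul]
  -- E agrees with F mod J, G-sum agrees with G' mod J
  have hcoeffE : ∀ (x : Matrix (Fin n) (Fin n) (PowerSeries R)) i j (p : ℕ), p ≤ m →
      PowerSeries.coeff p
          (PowerSeries.mk (fun m' =>
            ∑ k ∈ range (m' + 1), PowerSeries.coeff m' (((k.factorial : ℚ)⁻¹ • N ^ k) i j)))
        = PowerSeries.coeff p (F i j) := by
    intro x i j p hp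
    rw [PowerSeries.coeff_mk, hF, Matrix.sum_apply, map_sum]
    refine Finset.sum_subset (by intro t ht; simp at ht ⊢; omega) fun k _ hk => ?_
    have hpk : p < k := by simp at hk; omega
    rw [Matrix.smul_apply, PowerSeries.coeff_smul]
    rw [PowerSeries.X_pow_dvd_iff.1 (hD k i j) p hpk, smul_zero]
  have hcoeffG : ∀ (p : ℕ), p ≤ m →
      PowerSeries.coeff p
          (PowerSeries.mk (fun m' =>
            ∑ k ∈ range (m' + 1), PowerSeries.coeff m' ((k.factorial : ℚ)⁻¹ • N.trace ^ k)))
        = PowerSeries.coeff p G' := by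
    intro p hp
    rw [PowerSeries.coeff_mk, hG', map_sum]
    refine Finset.sum_subset (by intro t ht; simp at ht ⊢; omega) fun k _ hk => ?_
    have hpk : p < k := by simp at hk; omega
    rw [PowerSeries.coeff_smul]
    rw [PowerSeries.X_pow_dvd_iff.1 (hDtr k) p hpk, smul_zero]
  have hmemJ : ∀ x y : PowerSeries R,
      (∀ p : ℕ, p ≤ m → PowerSeries.coeff p x = PowerSeries.coeff p y) → π x = π y := by
    intro x y h
    rw [hπ, Ideal.Quotient.mk_eq_mk_iff_sub_mem, hJ, Ideal.mem_span_singleton,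
      PowerSeries.X_pow_dvd_iff]
    intro p hp
    rw [map_sub, h p (by omega), sub_self]
  -- put it together
  have hEF : π.mapMatrix (Matrix.of fun i j => PowerSeries.mk fun m' =>
      ∑ k ∈ range (m' + 1), PowerSeries.coeff m' (((k.factorial : ℚ)⁻¹ • N ^ k) i j))
      = π.mapMatrix F := by
    ext i j
    rw [RingHom.mapMatrix_apply, RingHom.mapMatrix_apply, Matrix.map_apply, Matrix.map_apply]
    exact hmemJ _ _ fun p hp => hcoeffE F i j p hp
  have main : π ((Matrix.of fun i j => PowerSeries.mk fun m' =>
      ∑ k ∈ range (m' + 1), PowerSeries.coeff m' (((k.factorial : ℚ)⁻¹ • N ^ k) i j)).det)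
      = π (PowerSeries.mk fun m' =>
        ∑ k ∈ range (m' + 1), PowerSeries.coeff m' ((k.factorial : ℚ)⁻¹ • N.trace ^ k)) := by
    rw [RingHom.map_det, hEF, hFmap, hcore, ← hGmap]
    exact (hmemJ _ _ fun p hp => hcoeffG p hp).symm
  have := (Ideal.Quotient.mk_eq_mk_iff_sub_mem _ _).1 main
  rw [hJ, Ideal.mem_span_singleton, PowerSeries.X_pow_dvd_iff] at this
  have h2 := this m (by omega)
  rw [map_sub, sub_eq_zero] at h2
  exact h2

end Main
end Stmt1Aux

open Stmt1Aux Finset in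
/-- Let `R` be a commutative `ℚ`-algebra and `n ∈ ℕ`.  Equip `R⟦u⟧` with the
coefficientwise product topology (`R` being discrete) and `M_n(R⟦u⟧)` with the product
topology.  If `N ∈ M_n(R⟦u⟧)` has all entries with zero constant coefficient, then the
families `((1/k!)·N^k)_k` and `((1/k!)·(tr N)^k)_k` are summable, and
`det (∑_k (1/k!)·N^k) = ∑_k (1/k!)·(tr N)^k`: the determinant of the matrix exponential of `N`
equals the exponential of its trace. -/
theorem stmt1 (R : Type*) [CommRing R] [Algebra ℚ R] (n : ℕ)
    (N : Matrix (Fin n) (Fin n) (PowerSeries R))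
    (hN : ∀ i j, PowerSeries.constantCoeff (N i j) = 0) :
    letI : TopologicalSpace R := ⊥
    letI : TopologicalSpace (PowerSeries R) :=
      TopologicalSpace.induced (fun (f : PowerSeries R) (k : ℕ) => PowerSeries.coeff k f)
        Pi.topologicalSpace
    Summable (fun k : ℕ => (k.factorial : ℚ)⁻¹ • N ^ k) ∧
      Summable (fun k : ℕ => (k.factorial : ℚ)⁻¹ • N.trace ^ k) ∧
      (∑' k : ℕ, (k.factorial : ℚ)⁻¹ • N ^ k).det =
        ∑' k : ℕ, (k.factorial : ℚ)⁻¹ • N.trace ^ k := by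
  classical
  -- divisibility facts
  have hD : ∀ (k : ℕ) (i j : Fin n), (PowerSeries.X : PowerSeries R) ^ k ∣ (N ^ k) i j := by
    intro k
    induction k with
    | zero => intro i j; simp
    | succ k ih =>
      intro i j
      rw [show N ^ (k+1) = N ^ k * N from pow_succ N k, Matrix.mul_apply]
      refine Finset.dvd_sum fun l _ => ?_
      rw [pow_succ]
      exact mul_dvd_mul (ih i l) (PowerSeries.X_dvd_iff.2 (hN l j))
  have htr0 : PowerSeries.constantCoeff N.trace = 0 := by
    rw [Matrix.trace, map_sum]
    exact Finset.sum_eq_zero fun i _ => hN i i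
  have hDtr : ∀ k : ℕ, (PowerSeries.X : PowerSeries R) ^ k ∣ N.trace ^ k := fun k =>
    pow_dvd_pow_of_dvd (PowerSeries.X_dvd_iff.2 htr0) k
  have hvm : ∀ (i j : Fin n) (p k : ℕ), p < k →
      PowerSeries.coeff p ((((k.factorial : ℚ)⁻¹ • N ^ k)) i j) = 0 := by
    intro i j p k hpk
    rw [Matrix.smul_apply, PowerSeries.coeff_smul,
      PowerSeries.X_pow_dvd_iff.1 (hD k i j) p hpk, smul_zero]
  have hvs : ∀ (p k : ℕ), p < k →
      PowerSeries.coeff p ((k.factorial : ℚ)⁻¹ • N.trace ^ k) = 0 := by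
    intro p k hpk
    rw [PowerSeries.coeff_smul, PowerSeries.X_pow_dvd_iff.1 (hDtr k) p hpk, smul_zero]
  have hmat := hasSum_mat (R := R) (fun k => (k.factorial : ℚ)⁻¹ • N ^ k) hvm
  have hsc := hasSum_ps (R := R) (fun k => (k.factorial : ℚ)⁻¹ • N.trace ^ k) hvs
  letI : TopologicalSpace R := ⊥
  letI : TopologicalSpace (PowerSeries R) := psTop R
  haveI ht2 : T2Space (PowerSeries R) := t2_ps
  haveI ht2m : T2Space (Matrix (Fin n) (Fin n) (PowerSeries R)) := inferInstance
  refine ⟨⟨_, hmat⟩, ⟨_, hsc⟩, ?_⟩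
  rw [hmat.tsum_eq, hsc.tsum_eq]
  exact det_exp_eq N hN
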